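/- Let M be a monoid and A a set. A map τ : A^M → A^M is a cellular automaton (i.e., shift-equivariant and uniformly continuous for the prodiscrete uniform structure) if and only if there exist a finite subset S ⊆ M and a map μ : A^S → A such that τ(x)(m) = μ((m•x)|_S) for all x ∈ A^M and m ∈ M. -/

import Mathlib

/-- The prodiscrete uniform structure on `M → A` (product of discrete uniformities). -/
def prodiscrete (M A : Type*) : UniformSpace (M → A) :=
  @Pi.uniformSpace M (fun _ => A) (fun _ => ⊥)

lemma prodiscrete_uniformity {M A : Type*} :
    @uniformity (M → A) (prodiscrete M A) =
      ⨅ m : M, Filter.comap (fun p : (M → A) × (M → A) => (p.1 m, p.2 m)) (Filter.principal (SetRel.id : SetRel A A)) := by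
  rw [show @uniformity (M → A) (prodiscrete M A)
      = @uniformity (M → A) (@Pi.uniformSpace M (fun _ => A) (fun _ => ⊥)) from rfl]
  rw [@Pi.uniformity M (fun _ => A) (fun _ => ⊥)]
  rfl

lemma prodiscrete_basic_mem {M A : Type*} (F : Finset M) :
    {p : (M → A) × (M → A) | ∀ n ∈ F, p.1 n = p.2 n} ∈
      @uniformity (M → A) (prodiscrete M A) := by
  rw [prodiscrete_uniformity]
  have : {p : (M → A) × (M → A) | ∀ n ∈ F, p.1 n = p.2 n}
      = ⋂ n ∈ F, {p : (M → A) × (M → A) | p.1 n = p.2 n} := by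
    ext p; simp
  rw [this]
  refine (Filter.biInter_mem F.finite_toSet).2 fun n _ => ?_
  refine Filter.mem_iInf_of_mem n ?_
  exact Filter.preimage_mem_comap (Filter.mem_principal_self _)

lemma prodiscrete_mem_elim {M A : Type*} {s : Set ((M → A) × (M → A))}
    (hs : s ∈ @uniformity (M → A) (prodiscrete M A)) :
    ∃ F : Finset M, {p : (M → A) × (M → A) | ∀ n ∈ F, p.1 n = p.2 n} ⊆ s := by
  rw [prodiscrete_uniformity, Filter.mem_iInf] at hs
  obtain ⟨I, Ifin, V, hV, rfl⟩ := hs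
  refine ⟨Ifin.toFinset, fun p hp => Set.mem_iInter.2 fun i => ?_⟩
  have h1 := hV i
  rw [Filter.mem_comap] at h1
  obtain ⟨t, ht, hsub⟩ := h1
  apply hsub
  have : (p.1 (i : M), p.2 (i : M)) ∈ (SetRel.id : SetRel A A) := hp (i : M) (Ifin.mem_toFinset.2 i.2)
  exact Filter.mem_principal.1 ht this

theorem cellular_automaton_iff_local_rule
    {M A : Type*} [Monoid M] (τ : (M → A) → (M → A)) :
    ((∀ (m : M) (x : M → A), τ (fun u => x (u * m)) = fun u => τ x (u * m)) ∧
      @UniformContinuous _ _ (prodiscrete M A) (prodiscrete M A) τ) ↔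
    ∃ (S : Finset M) (μ : (S → A) → A),
      ∀ (x : M → A) (m : M), τ x m = μ (fun s => x (↑s * m)) := by
  classical
  constructor
  · rintro ⟨heq, hc⟩
    cases isEmpty_or_nonempty A with
    | inl hA =>
      exact ⟨{1}, fun f => isEmptyElim (f ⟨1, Finset.mem_singleton_self 1⟩),
        fun x m => isEmptyElim (x 1)⟩
    | inr hA =>
      have key : ∃ S : Finset M, ∀ x x' : M → A,
          (∀ n ∈ S, x n = x' n) → τ x 1 = τ x' 1 := by
        have hU : {q : (M → A) × (M → A) | q.1 1 = q.2 1} ∈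
            @uniformity (M → A) (prodiscrete M A) :=
          Filter.mem_of_superset (prodiscrete_basic_mem {1})
            (fun p hp => hp 1 (Finset.mem_singleton_self 1))
        have hV := hc hU
        obtain ⟨F, hF⟩ := prodiscrete_mem_elim hV
        exact ⟨F, fun x x' hxx =>
          hF (show ((x, x') : (M → A) × (M → A)) ∈
            {p : (M → A) × (M → A) | ∀ n ∈ F, p.1 n = p.2 n} from hxx)⟩
      obtain ⟨S, hS⟩ := key
      refine ⟨S, fun p => τ (fun n => if h : n ∈ S then p ⟨n, h⟩ else Classical.arbitrary A) 1,
        fun x m => ?_⟩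
      have h1 : τ x m = τ (fun u => x (u * m)) 1 := by
        rw [heq m x]; simp
      rw [h1]
      apply hS
      intro n hn
      simp [hn]
  · rintro ⟨S, μ, h⟩
    refine ⟨fun m x => ?_, ?_⟩
    · funext u
      rw [h, h]
      exact congrArg μ (funext fun s => by rw [mul_assoc])
    · intro s hs
      rw [Filter.mem_map]
      obtain ⟨F, hF⟩ := prodiscrete_mem_elim hs
      have : {p : (M → A) × (M → A) | ∀ n ∈ F.image (fun m => m) ∪
          F.biUnion (fun m => S.image (fun s => s * m)), p.1 n = p.2 n} ⊆
          (fun p : (M → A) × (M → A) => (τ p.1, τ p.2)) ⁻¹' s := by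
        intro p hp
        apply hF
        intro n hn
        show τ p.1 n = τ p.2 n
        rw [h, h]
        refine congrArg μ (funext fun t => ?_)
        apply hp
        refine Finset.mem_union_right _ (Finset.mem_biUnion.2 ⟨n, hn, ?_⟩)
        exact Finset.mem_image.2 ⟨t, t.2, rfl⟩
      exact Filter.mem_of_superset (prodiscrete_basic_mem _) this
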